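/- Let γ = (√5−1)/2 and let W be the Wythoff swap sequence. Then for all n ≥ 1, (n+1)·⌊(n+1)γ⌋ − n·⌊nγ⌋ = W(n). -/

import Mathlib

set_option maxHeartbeats 1600000


/-- For the Wythoff swap sequence `W` and `γ = (√5−1)/2`, one has
`(n+1)·⌊(n+1)γ⌋ − n·⌊nγ⌋ = W(n)` for all `n ≥ 1`, i.e.,
`(n+1)·G(n) − n·G(n−1) = W(n)` for Hofstadter's G-sequence `G`. -/
theorem wythoff_swap_eq_G_difference
    (φ γ : ℝ) (hφ : φ = (1 + Real.sqrt 5) / 2) (hγ : γ = (Real.sqrt 5 - 1) / 2)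
    (L U : ℕ → ℕ)
    (hL : ∀ n : ℕ, L n = ⌊(n : ℝ) * φ⌋₊)
    (hU : ∀ n : ℕ, U n = ⌊(n : ℝ) * φ ^ 2⌋₊)
    (W : ℕ → ℕ) (hW0 : W 0 = 0)
    (hWL : ∀ k : ℕ, 1 ≤ k → W (L k) = U k)
    (hWU : ∀ k : ℕ, 1 ≤ k → W (U k) = L k) :
    ∀ n : ℕ, 1 ≤ n →
      (n + 1) * ⌊((n : ℝ) + 1) * γ⌋₊ - n * ⌊(n : ℝ) * γ⌋₊ = W n := by
  have hs5 : Real.sqrt 5 ^ 2 = 5 := Real.sq_sqrt (by norm_num)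
  have hs2 : 2 < Real.sqrt 5 := by
    nlinarith [Real.sqrt_nonneg 5]
  have hs3 : Real.sqrt 5 < 3 := by
    nlinarith [Real.sqrt_nonneg 5]
  have hφpos : 0 < φ := by rw [hφ]; nlinarith
  have hγpos : 0 < γ := by rw [hγ]; nlinarith
  have hγ1 : γ < 1 := by rw [hγ]; nlinarith
  have hγφ : γ * φ = 1 := by rw [hγ, hφ]; nlinarith
  have hφγ : φ = 1 + γ := by rw [hγ, hφ]; ring
  have hφ2 : φ ^ 2 = φ + 1 := by rw [hφ]; nlinarith
  -- irrationality of φ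
  have h5irr : Irrational (Real.sqrt 5) := by
    have := (by norm_num : Nat.Prime 5).irrational_sqrt
    simpa using this
  have hφirr : Irrational φ := by
    rw [hφ]
    have h1 : Irrational (1 + Real.sqrt 5) := by
      have := h5irr.ratCast_add 1
      simpa using this
    have := h1.div_natCast (m := 2) (by norm_num)
    simpa using this
  have hne : ∀ a b : ℕ, 1 ≤ a → (a : ℝ) * φ ≠ (b : ℝ) := by
    intro a b ha
    have := (hφirr.natCast_mul (m := a) (by omega)).ne_nat b
    exact this
  have hmul : ∀ x : ℝ, x * γ * φ = x := by
    intro x; rw [mul_assoc, hγφ, mul_one]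
  intro n hn
  set A := ⌊(n : ℝ) * γ⌋₊ with hA
  set B := ⌊((n : ℝ) + 1) * γ⌋₊ with hB
  have hApos : (0:ℝ) ≤ (n : ℝ) * γ := by positivity
  have hBpos : (0:ℝ) ≤ ((n : ℝ) + 1) * γ := by positivity
  have hAle : (A : ℝ) ≤ (n : ℝ) * γ := Nat.floor_le hApos
  have hAlt : (n : ℝ) * γ < A + 1 := Nat.lt_floor_add_one _
  have hBle : (B : ℝ) ≤ ((n : ℝ) + 1) * γ := Nat.floor_le hBpos
  have hBlt : ((n : ℝ) + 1) * γ < B + 1 := Nat.lt_floor_add_one _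
  have hAB : A ≤ B := Nat.floor_le_floor (by nlinarith)
  have hBA : B ≤ A + 1 := by
    have h1 : ((n : ℝ) + 1) * γ < (A : ℝ) + 1 + 1 := by nlinarith
    have := Nat.floor_lt hBpos |>.mpr (by push_cast; linarith : ((n : ℝ) + 1) * γ < ((A + 2 : ℕ) : ℝ))
    omega
  have hn1 : (1:ℝ) ≤ (n : ℝ) := by exact_mod_cast hn
  have hB1 : 1 ≤ B := by
    apply Nat.le_floor
    push_cast
    nlinarith
  rcases (by omega : B = A ∨ B = A + 1) with hcase | hcase
  · -- n is in the upper Wythoff sequence: n = U k, k = n - A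
    have hA1 : 1 ≤ A := by omega
    have hAn : A < n := by
      have : (A : ℝ) < (n : ℝ) := by nlinarith
      exact_mod_cast this
    set k := n - A with hk
    have hk1 : 1 ≤ k := by omega
    have hkn : (k : ℝ) = (n : ℝ) - (A : ℝ) := by
      rw [hk, Nat.cast_sub hAn.le]
    -- A·φ < n strictly
    have hAφn : (A : ℝ) * φ < (n : ℝ) := by
      have hle : (A : ℝ) * φ ≤ (n : ℝ) := by
        have := mul_le_mul_of_nonneg_right hAle hφpos.le
        have h2 := hmul (n : ℝ)
        linarith
      exact lt_of_le_of_ne hle (hne A n hA1)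
    -- ℓ < kφ
    have h1 : (A : ℝ) < (k : ℝ) * φ := by
      have hy : (A : ℝ) * γ < (n : ℝ) - (A : ℝ) := by nlinarith [hφγ]
      rw [hkn]
      have := mul_lt_mul_of_pos_right hy hφpos
      have h3 := hmul (A : ℝ)
      nlinarith
    -- kφ < ℓ + 1, using (n+1)γ < A + 1 (from hcase: B = A)
    have hBlt' : ((n : ℝ) + 1) * γ < (A : ℝ) + 1 := by
      rw [hcase] at hBlt; push_cast at hBlt; linarith
    have h2 : (k : ℝ) * φ < (A : ℝ) + 1 := by
      have hx : (n : ℝ) + 1 < ((A : ℝ) + 1) * φ := by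
        have := mul_lt_mul_of_pos_right hBlt' hφpos
        have h2 := hmul ((n : ℝ) + 1)
        linarith
      have hy : (n : ℝ) - (A : ℝ) < ((A : ℝ) + 1) * γ := by nlinarith [hφγ]
      rw [hkn]
      have := mul_lt_mul_of_pos_right hy hφpos
      have h3 := hmul ((A : ℝ) + 1)
      nlinarith
    have hLk : L k = A := by
      rw [hL, Nat.floor_eq_iff (by positivity)]
      exact ⟨le_of_lt h1, by push_cast; linarith⟩
    have hUk : U k = n := by
      rw [hU, Nat.floor_eq_iff (by positivity)]
      have hkφ2 : (k : ℝ) * φ ^ 2 = (k : ℝ) * φ + (k : ℝ) := by rw [hφ2]; ring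
      constructor
      · rw [hkφ2]; linarith [hkn]
      · rw [hkφ2]; push_cast; linarith [hkn]
    have hWn : W n = A := by
      have hw := hWU k hk1
      rw [hUk, hLk] at hw
      exact hw
    rw [hWn, hcase]
    have : (n + 1) * A = n * A + A := by ring
    omega
  · -- n is in the lower Wythoff sequence: n = L B
    have hk1 : 1 ≤ B := hB1
    have hkφle : (B : ℝ) * φ ≤ (n : ℝ) + 1 := by
      have := mul_le_mul_of_nonneg_right hBle hφpos.le
      have h2 := hmul ((n : ℝ) + 1)
      nlinarith
    have hkφlt : (B : ℝ) * φ < (n : ℝ) + 1 := by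
      refine lt_of_le_of_ne hkφle ?_
      have := hne B (n + 1) hk1
      push_cast at this ⊢
      simpa using this
    have hnlt : (n : ℝ) < (B : ℝ) * φ := by
      have h1 : (n : ℝ) * γ < (B : ℝ) := by
        rw [hcase]; push_cast; linarith
      have := mul_lt_mul_of_pos_right h1 hφpos
      have h2 := hmul (n : ℝ)
      linarith
    have hLk : L B = n := by
      rw [hL, Nat.floor_eq_iff (by positivity)]
      exact ⟨le_of_lt hnlt, by push_cast; linarith⟩
    have hUk : U B = n + B := by
      rw [hU, Nat.floor_eq_iff (by positivity)]
      have hkφ2 : (B : ℝ) * φ ^ 2 = (B : ℝ) * φ + (B : ℝ) := by rw [hφ2]; ring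
      constructor
      · rw [hkφ2]; push_cast; linarith
      · rw [hkφ2]; push_cast; linarith
    have hWn : W n = n + B := by
      have hw := hWL B hk1
      rw [hLk, hUk] at hw
      exact hw
    rw [hWn, hcase]
    have e1 : (n + 1) * (A + 1) = n * A + (n + A + 1) := by ring
    omega
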